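/- Let E be a nonzero real Banach space and f : E × E* → ]−∞,∞] proper convex with f ≥ q_L on E × E*. Suppose also that f^@ := f* ∘ L satisfies f^@ ≥ q_L on E × E*, where L(x,x*) = (x*, x̂). Then coinc[f] ⊆ coinc[f^@], i.e., if f(a) = q_L(a) then f^@(a) = q_L(a). -/

import Mathlib

/-- `f^@ = f* ∘ L`, where `L(x,x*) = (x*, x̂)` and the dual of `E × E*` is identified
with `E* × E**`;  explicitly `f^@(a) = sup_b [⟨b, La⟩ − f(b)]`. -/
noncomputable def fat {E : Type*} [NormedAddCommGroup E] [NormedSpace ℝ E]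
    (f : E × StrongDual ℝ E → EReal) (a : E × StrongDual ℝ E) : EReal :=
  ⨆ b : E × StrongDual ℝ E, ((a.2 b.1 + b.2 a.1 : ℝ) : EReal) - f b

theorem stmt12 {E : Type*} [NormedAddCommGroup E] [NormedSpace ℝ E] [CompleteSpace E]
    [Nontrivial E]
    (f : E × StrongDual ℝ E → EReal)
    (hfbot : ∀ b, f b ≠ ⊥) (hproper : ∃ b, f b ≠ ⊤)
    (hconv : ∀ b c : E × StrongDual ℝ E, ∀ a a' : ℝ, 0 ≤ a → 0 ≤ a' → a + a' = 1 →
      f (a • b + a' • c) ≤ (a : EReal) * f b + (a' : EReal) * f c)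
    (hge : ∀ b : E × StrongDual ℝ E, ((b.2 b.1 : ℝ) : EReal) ≤ f b)
    (hfatge : ∀ b : E × StrongDual ℝ E, ((b.2 b.1 : ℝ) : EReal) ≤ fat f b)
    (a : E × StrongDual ℝ E)
    (ha : f a = ((a.2 a.1 : ℝ) : EReal)) :
    fat f a = ((a.2 a.1 : ℝ) : EReal) := by
  refine le_antisymm ?_ (hfatge a)
  apply iSup_le
  intro b
  rcases eq_or_ne (f b) ⊤ with hT | hT
  · simp [hT]
  · obtain ⟨β, hβ⟩ : ∃ β : ℝ, f b = (β : EReal) := by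
      have h1 := hfbot b
      cases h : f b with
      | bot => exact absurd h h1
      | top => exact absurd h hT
      | coe β => exact ⟨β, rfl⟩
    set qa : ℝ := a.2 a.1 with hqa
    set qb : ℝ := b.2 b.1 with hqb
    set s : ℝ := a.2 b.1 + b.2 a.1 with hs
    have key : ∀ t : ℝ, 0 < t → t < 1 →
        (1 - t) * s + t * qb - (1 - t) * qa ≤ β := by
      intro t ht ht1
      have h1 := hconv a b (1 - t) t (by linarith) ht.le (by ring)
      have h2 := hge ((1 - t) • a + t • b)
      have hcomb : (((1 - t) • a + t • b).2 (((1 - t) • a + t • b).1) : ℝ)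
          = (1-t)*(1-t)*qa + (1-t)*t*(a.2 b.1) + t*(1-t)*(b.2 a.1) + t*t*qb := by
        simp [Prod.smul_fst, Prod.smul_snd, map_add, map_smul, smul_eq_mul, hqa, hqb]
        ring
      have h3 := h2.trans h1
      rw [hcomb, ha, hβ] at h3
      have h4 : (((1-t)*(1-t)*qa + (1-t)*t*(a.2 b.1) + t*(1-t)*(b.2 a.1) + t*t*qb : ℝ) : EReal)
          ≤ (((1 - t) * qa + t * β : ℝ) : EReal) := by
        convert h3 using 2
        rw [EReal.coe_add, EReal.coe_mul, EReal.coe_mul]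
      have h5 := EReal.coe_le_coe_iff.1 h4
      have := ht.le
      nlinarith [h5]
    have hβge : s - qa ≤ β := by
      have hlim : Filter.Tendsto (fun t : ℝ => (1 - t) * s + t * qb - (1 - t) * qa)
          (nhdsWithin 0 (Set.Ioi 0)) (nhds (s - qa)) := by
        have hc : Continuous (fun t : ℝ => (1 - t) * s + t * qb - (1 - t) * qa) := by
          continuity
        have := hc.tendsto' 0 (s - qa) (by ring)
        exact this.mono_left nhdsWithin_le_nhds
      refine le_of_tendsto hlim ?_
      filter_upwards [Ioo_mem_nhdsGT_of_mem (by norm_num : (0:ℝ) ∈ Set.Ico 0 1)]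
        with t ht
      exact key t ht.1 ht.2
    rw [hβ]
    have : ((s : EReal) - (β : EReal)) = ((s - β : ℝ) : EReal) := by
      rw [EReal.coe_sub]
    rw [this]
    exact EReal.coe_le_coe_iff.2 (by linarith)
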